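/- Let r, s be real numbers such that nr + ms ∉ ℤ for every pair of integers (n,m) ≠ (0,0), and let T be the plane translation T(x,y) = (x+r, y+s) (so the induced rotation of the torus ℝ²/ℤ² is ergodic for Lebesgue measure). Then for every exchange of pieces R conjugate to T and every integer n ≥ 1, the complexity satisfies p_R(n) ≥ 2n+1. In particular the complexity function associated to T (the infimum of p_R(n) over all exchanges of pieces R conjugate to T) is at least 2n+1 for every n. -/

import Mathlib

open MeasureTheory Filter Topology

noncomputable section

/-- The inclusion of `ℤ × ℤ` into `ℝ × ℝ`. -/
def latVec (v : ℤ × ℤ) : ℝ × ℝ := ((v.1 : ℝ), (v.2 : ℝ))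

/-- An exchange of `m` pieces of the plane adapted to a measurable map `T` of the plane:
measurable pieces `D i`, pairwise almost disjoint, whose union has Lebesgue measure 1 and is
almost surely a fundamental domain for `ℤ²`, together with integer vectors `vec i` and the
exchange map `R` acting on the union of the pieces by `R x = T x - vec i` for `x ∈ D i`,
preserving Lebesgue measure.  `C` is the coding map: `C x k` records the piece containing
`R^[k] x`. -/
structure PieceExchange (T : ℝ × ℝ → ℝ × ℝ) (m : ℕ) where
  D : Fin m → Set (ℝ × ℝ)
  vec : Fin m → ℤ × ℤ
  R : ℝ × ℝ → ℝ × ℝ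
  C : ℝ × ℝ → ℕ → Fin m
  measD : ∀ i, MeasurableSet (D i)
  aeDisjoint : ∀ i j, i ≠ j → volume (D i ∩ D j) = 0
  measure_union : volume (⋃ i, D i) = 1
  fundamental :
    volume {x | x ∈ ⋃ i, D i ∧ ∃ y ∈ ⋃ i, D i, y ≠ x ∧ ∃ a b : ℤ, x - y = ((a : ℝ), (b : ℝ))} = 0
  measR : Measurable R
  measC : Measurable C
  mem_code : ∀ x ∈ ⋃ i, D i, ∀ k : ℕ, R^[k] x ∈ D (C x k)
  R_eq : ∀ x ∈ ⋃ i, D i, ∀ k : ℕ, R (R^[k] x) = T (R^[k] x) - latVec (vec (C x k))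
  meas_pres : ∀ A : Set (ℝ × ℝ), MeasurableSet A →
    volume ((⋃ i, D i) ∩ R ⁻¹' A) = volume ((⋃ i, D i) ∩ A)

namespace PieceExchange

variable {T : ℝ × ℝ → ℝ × ℝ} {m : ℕ}

/-- The domain of the exchange: the union of the pieces. -/
def domain (E : PieceExchange T m) : Set (ℝ × ℝ) := ⋃ i, E.D i

/-- The exchange is conjugate to `T` when the coding map is injective off a Lebesgue-null set. -/
def Conjugate (E : PieceExchange T m) : Prop :=
  volume {x | x ∈ E.domain ∧ ∃ y ∈ E.domain, y ≠ x ∧ E.C y = E.C x} = 0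

/-- The language of the exchange: all finite factors of coding sequences. -/
def lang (E : PieceExchange T m) : Set (List (Fin m)) :=
  {w | ∃ n k : ℕ, ∃ x ∈ E.domain, w = (List.range n).map fun j => E.C x (k + j)}

/-- The complexity of the exchange: the number of words of length `n` in its language. -/
def complexity (E : PieceExchange T m) (n : ℕ) : ℕ :=
  Nat.card {w : List (Fin m) // w ∈ E.lang ∧ w.length = n}

end PieceExchange

/-- The complexity function associated to `T`: the infimum of the complexities of the
exchanges of pieces conjugate to `T` (`⊤` if there is no such exchange). -/
def complexityFn (T : ℝ × ℝ → ℝ × ℝ) (n : ℕ) : ℕ∞ :=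
  ⨅ (m : ℕ) (E : PieceExchange T m) (_ : E.Conjugate), (E.complexity n : ℕ∞)


namespace St0
open scoped ENNReal


lemma norm_fst_le' (v : ℝ × ℝ) : |v.1| ≤ ‖v‖ := by
  simpa using norm_fst_le v

lemma norm_snd_le' (v : ℝ × ℝ) : |v.2| ≤ ‖v‖ := by
  simpa using norm_snd_le v

/-- Growth lemma. -/
lemma growth (r s : ℝ)
    (hirr : ∀ p q : ℤ, (p, q) ≠ (0, 0) → ∀ k : ℤ, (p : ℝ) * r + (q : ℝ) * s ≠ (k : ℝ))
    (ℓ₁ ℓ₂ : ℕ) (h1 : 1 ≤ ℓ₁) (h2 : 1 ≤ ℓ₂) (Δ₁ Δ₂ : ℝ × ℝ)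
    (hΔ1 : ∃ L : ℤ × ℤ, Δ₁ = (ℓ₁ : ℝ) • ((r, s) : ℝ × ℝ) - latVec L)
    (hΔ2 : ∃ L : ℤ × ℤ, Δ₂ = (ℓ₂ : ℝ) • ((r, s) : ℝ × ℝ) - latVec L) :
    ∃ c > 0, ∀ m₁ m₂ : ℕ,
      c * ((m₁ * ℓ₁ + m₂ * ℓ₂ : ℕ) : ℝ) ≤ ‖(m₁ : ℝ) • Δ₁ + (m₂ : ℝ) • Δ₂‖ := by
  obtain ⟨L₁, hL1⟩ := hΔ1
  obtain ⟨L₂, hL2⟩ := hΔ2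
  have e1 : Δ₁.1 = (ℓ₁:ℝ) * r - (L₁.1 : ℝ) := by rw [hL1]; simp [latVec]
  have e2 : Δ₁.2 = (ℓ₁:ℝ) * s - (L₁.2 : ℝ) := by rw [hL1]; simp [latVec]
  have e3 : Δ₂.1 = (ℓ₂:ℝ) * r - (L₂.1 : ℝ) := by rw [hL2]; simp [latVec]
  have e4 : Δ₂.2 = (ℓ₂:ℝ) * s - (L₂.2 : ℝ) := by rw [hL2]; simp [latVec]
  have hΔ1ne : Δ₁ ≠ 0 := by
    intro h
    rw [h] at e1
    simp only [Prod.fst_zero] at e1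
    refine hirr ℓ₁ 0 (by simp; omega) L₁.1 ?_
    push_cast
    linarith [e1]
  set D12 : ℝ := Δ₁.1 * Δ₂.2 - Δ₁.2 * Δ₂.1 with hD12
  have hl1 : (0:ℝ) < ℓ₁ := by exact_mod_cast h1
  by_cases hD : D12 = 0
  · -- proportional case : ℓ₂ • Δ₁ = ℓ₁ • Δ₂
    have hprop : (ℓ₂ : ℝ) • Δ₁ = (ℓ₁ : ℝ) • Δ₂ := by
      rw [hD12, e1, e2, e3, e4] at hD
      have key : ((ℓ₂ * L₁.2 - ℓ₁ * L₂.2 : ℤ) : ℝ) * r + ((ℓ₁ * L₂.1 - ℓ₂ * L₁.1 : ℤ) : ℝ) * s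
          = ((L₂.1 * L₁.2 - L₁.1 * L₂.2 : ℤ) : ℝ) := by
        push_cast
        linear_combination hD
      have hzero : (ℓ₂ * L₁.2 - ℓ₁ * L₂.2 : ℤ) = 0 ∧ (ℓ₁ * L₂.1 - ℓ₂ * L₁.1 : ℤ) = 0 := by
        by_contra hcon
        refine hirr _ _ ?_ _ key
        intro hpq
        rw [Prod.mk.injEq] at hpq
        exact hcon ⟨hpq.1, hpq.2⟩
      have hb : ((ℓ₂ : ℝ)) * (L₁.2:ℝ) = (ℓ₁:ℝ) * (L₂.2:ℝ) := by
        have : (ℓ₂ * L₁.2 : ℤ) = ℓ₁ * L₂.2 := by linarith [hzero.1]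
        exact_mod_cast congrArg (Int.cast : ℤ → ℝ) this
      have ha : ((ℓ₂ : ℝ)) * (L₁.1:ℝ) = (ℓ₁:ℝ) * (L₂.1:ℝ) := by
        have : (ℓ₂ * L₁.1 : ℤ) = ℓ₁ * L₂.1 := by linarith [hzero.2]
        exact_mod_cast congrArg (Int.cast : ℤ → ℝ) this
      have c1 : ((ℓ₂:ℝ) • Δ₁).1 = ((ℓ₁:ℝ) • Δ₂).1 := by
        simp only [Prod.smul_fst, smul_eq_mul, e1, e3]; linear_combination -ha
      have c2 : ((ℓ₂:ℝ) • Δ₁).2 = ((ℓ₁:ℝ) • Δ₂).2 := by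
        simp only [Prod.smul_snd, smul_eq_mul, e2, e4]; linear_combination -hb
      exact Prod.ext c1 c2
    refine ⟨‖Δ₁‖ / ℓ₁, div_pos (norm_pos_iff.mpr hΔ1ne) hl1, ?_⟩
    intro m₁ m₂
    set v : ℝ × ℝ := (m₁ : ℝ) • Δ₁ + (m₂ : ℝ) • Δ₂ with hv
    have h' : (ℓ₁:ℝ) • Δ₂ = (ℓ₂:ℝ) • Δ₁ := hprop.symm
    have hsum : (ℓ₁ : ℝ) • v = ((m₁ * ℓ₁ + m₂ * ℓ₂ : ℕ) : ℝ) • Δ₁ := by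
      calc (ℓ₁:ℝ) • v = ((m₁:ℝ) * ℓ₁) • Δ₁ + (m₂:ℝ) • ((ℓ₁:ℝ) • Δ₂) := by rw [hv]; module
        _ = ((m₁:ℝ) * ℓ₁) • Δ₁ + (m₂:ℝ) • ((ℓ₂:ℝ) • Δ₁) := by rw [h']
        _ = ((m₁ * ℓ₁ + m₂ * ℓ₂ : ℕ) : ℝ) • Δ₁ := by push_cast; module
    have hnorm := congrArg norm hsum
    rw [norm_smul, norm_smul, Real.norm_natCast, Real.norm_natCast] at hnorm
    rw [div_mul_eq_mul_div, div_le_iff₀ hl1]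
    linarith [hnorm]
  · -- independent case
    have hΔ2norm : (0:ℝ) < ‖Δ₂‖ := by
      rcases eq_or_ne Δ₂ 0 with h | h
      · exfalso; apply hD; rw [hD12, h]; simp
      · exact norm_pos_iff.mpr h
    have hΔ1norm : (0:ℝ) < ‖Δ₁‖ := norm_pos_iff.mpr hΔ1ne
    set c : ℝ := |D12| / (2 * (ℓ₁ * ‖Δ₂‖ + ℓ₂ * ‖Δ₁‖)) with hc
    have hden : (0:ℝ) < 2 * (ℓ₁ * ‖Δ₂‖ + ℓ₂ * ‖Δ₁‖) := by
      have g1 : (1:ℝ) ≤ ℓ₁ := by exact_mod_cast h1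
      have g2 : (1:ℝ) ≤ ℓ₂ := by exact_mod_cast h2
      nlinarith
    have habs : (0:ℝ) < |D12| := abs_pos.mpr hD
    refine ⟨c, by rw [hc]; positivity, ?_⟩
    intro m₁ m₂
    set v : ℝ × ℝ := (m₁ : ℝ) • Δ₁ + (m₂ : ℝ) • Δ₂ with hv
    have hcross1 : v.1 * Δ₂.2 - v.2 * Δ₂.1 = (m₁ : ℝ) * D12 := by
      rw [hv, hD12]; simp only [Prod.fst_add, Prod.snd_add, Prod.smul_fst, Prod.smul_snd,
        smul_eq_mul]; ring
    have hcross2 : Δ₁.1 * v.2 - Δ₁.2 * v.1 = (m₂ : ℝ) * D12 := by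
      rw [hv, hD12]; simp only [Prod.fst_add, Prod.snd_add, Prod.smul_fst, Prod.smul_snd,
        smul_eq_mul]; ring
    have hb1 : (m₁ : ℝ) * |D12| ≤ 2 * ‖v‖ * ‖Δ₂‖ := by
      have h0 : |(m₁ : ℝ) * D12| = (m₁:ℝ) * |D12| := by rw [abs_mul, Nat.abs_cast]
      rw [← h0, ← hcross1]
      have q1 : |v.1| * |Δ₂.2| ≤ ‖v‖ * ‖Δ₂‖ :=
        mul_le_mul (norm_fst_le' v) (norm_snd_le' Δ₂) (abs_nonneg _) (norm_nonneg _)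
      have q2 : |v.2| * |Δ₂.1| ≤ ‖v‖ * ‖Δ₂‖ :=
        mul_le_mul (norm_snd_le' v) (norm_fst_le' Δ₂) (abs_nonneg _) (norm_nonneg _)
      calc |v.1 * Δ₂.2 - v.2 * Δ₂.1| ≤ |v.1 * Δ₂.2| + |v.2 * Δ₂.1| := abs_sub _ _
        _ = |v.1| * |Δ₂.2| + |v.2| * |Δ₂.1| := by rw [abs_mul, abs_mul]
        _ ≤ 2 * ‖v‖ * ‖Δ₂‖ := by linarith
    have hb2 : (m₂ : ℝ) * |D12| ≤ 2 * ‖v‖ * ‖Δ₁‖ := by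
      have h0 : |(m₂ : ℝ) * D12| = (m₂:ℝ) * |D12| := by rw [abs_mul, Nat.abs_cast]
      rw [← h0, ← hcross2]
      have q1 : |Δ₁.1| * |v.2| ≤ ‖Δ₁‖ * ‖v‖ :=
        mul_le_mul (norm_fst_le' Δ₁) (norm_snd_le' v) (abs_nonneg _) (norm_nonneg _)
      have q2 : |Δ₁.2| * |v.1| ≤ ‖Δ₁‖ * ‖v‖ :=
        mul_le_mul (norm_snd_le' Δ₁) (norm_fst_le' v) (abs_nonneg _) (norm_nonneg _)
      calc |Δ₁.1 * v.2 - Δ₁.2 * v.1| ≤ |Δ₁.1 * v.2| + |Δ₁.2 * v.1| := abs_sub _ _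
        _ = |Δ₁.1| * |v.2| + |Δ₁.2| * |v.1| := by rw [abs_mul, abs_mul]
        _ ≤ 2 * ‖v‖ * ‖Δ₁‖ := by linarith
    rw [hc, div_mul_eq_mul_div, div_le_iff₀ hden]
    push_cast
    nlinarith [hb1, hb2, norm_nonneg v, hΔ1norm.le, hΔ2norm.le,
      mul_le_mul_of_nonneg_left hb1 (le_of_lt hl1)]




variable {m : ℕ}

/-- Partial sums of displacements. -/
def Ssum (δ : Fin m → ℝ × ℝ) (u : ℕ → Fin m) (N : ℕ) : ℝ × ℝ :=
  ∑ j ∈ Finset.range N, δ (u j)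

/-- window of length `k` at position `j`. -/
def Wnd (u : ℕ → Fin m) (k j : ℕ) : Fin k → Fin m := fun i => u (j + i)

def InZt (t : ℝ × ℝ) (g : ℕ) (Δ : ℝ × ℝ) : Prop :=
  ∃ L : ℤ × ℤ, Δ = (g : ℝ) • t - latVec L

lemma InZt.add {t g₁ g₂ Δ₁ Δ₂} (h1 : InZt t g₁ Δ₁) (h2 : InZt t g₂ Δ₂) :
    InZt t (g₁ + g₂) (Δ₁ + Δ₂) := by
  obtain ⟨L₁, rfl⟩ := h1
  obtain ⟨L₂, rfl⟩ := h2
  refine ⟨L₁ + L₂, ?_⟩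
  have : latVec (L₁ + L₂) = latVec L₁ + latVec L₂ := by
    simp [latVec, Prod.ext_iff]
  rw [this]
  push_cast
  module

lemma Ssum_add (δ : Fin m → ℝ × ℝ) (u : ℕ → Fin m) (a g : ℕ) :
    Ssum δ u (a + g) = Ssum δ u a + ∑ e ∈ Finset.range g, δ (u (a + e)) := by
  induction g with
  | zero => simp [Ssum]
  | succ g ih =>
      rw [show a + (g+1) = (a+g) + 1 from rfl, Ssum, Finset.sum_range_succ, ← Ssum, ih,
        Finset.sum_range_succ, add_assoc]

lemma InZt.block (t : ℝ × ℝ) (δ : Fin m → ℝ × ℝ) (hδ : ∀ i, InZt t 1 (δ i))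
    (u : ℕ → Fin m) (a g : ℕ) : InZt t g (∑ e ∈ Finset.range g, δ (u (a + e))) := by
  induction g with
  | zero => exact ⟨0, by simp [latVec]; rfl⟩
  | succ g ih =>
      rw [Finset.sum_range_succ]
      exact ih.add (hδ _)

lemma block_norm (δ : Fin m → ℝ × ℝ) (dm : ℝ) (hdm : ∀ i, ‖δ i‖ ≤ dm)
    (u : ℕ → Fin m) (a g : ℕ) : ‖∑ e ∈ Finset.range g, δ (u (a + e))‖ ≤ g * dm := by
  calc ‖∑ e ∈ Finset.range g, δ (u (a + e))‖ ≤ ∑ e ∈ Finset.range g, ‖δ (u (a + e))‖ :=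
        norm_sum_le _ _
    _ ≤ ∑ _e ∈ Finset.range g, dm := Finset.sum_le_sum fun e _ => hdm _
    _ = g * dm := by simp [mul_comm]

lemma stepW (u : ℕ → Fin m) (k j j' : ℕ) (hW : Wnd u k j = Wnd u k j')
    (hu : u (j + k) = u (j' + k)) : Wnd u k (j + 1) = Wnd u k (j' + 1) := by
  funext i
  show u (j + 1 + i) = u (j' + 1 + i)
  rcases lt_or_eq_of_le (Nat.succ_le_of_lt i.isLt) with h | h
  · -- (i:ℕ)+1 < k
    have h1 : j + 1 + (i : ℕ) = j + ((⟨(i:ℕ)+1, h⟩ : Fin k) : ℕ) := by simp; omega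
    have h2 : j' + 1 + (i : ℕ) = j' + ((⟨(i:ℕ)+1, h⟩ : Fin k) : ℕ) := by simp; omega
    rw [h1, h2]
    exact congrFun hW _
  · -- (i:ℕ)+1 = k
    have h1 : j + 1 + (i : ℕ) = j + k := by omega
    have h2 : j' + 1 + (i : ℕ) = j' + k := by omega
    rw [h1, h2, hu]

lemma sync (u : ℕ → Fin m) (k : ℕ) (ws : Fin k → Fin m) (F : (Fin k → Fin m) → Fin m)
    (Hdet : ∀ j, Wnd u k j ≠ ws → u (j + k) = F (Wnd u k j))
    (j j' : ℕ) (hW : Wnd u k j = Wnd u k j')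
    (hch0 : Wnd u k j = ws → u (j + k) = u (j' + k)) :
    ∀ d, (∀ e, 1 ≤ e → e < d → Wnd u k (j + e) ≠ ws) →
      (∀ e ≤ d, Wnd u k (j + e) = Wnd u k (j' + e)) ∧
      (∀ e < d, u (j + e + k) = u (j' + e + k)) := by
  intro d
  induction d with
  | zero =>
      intro _
      refine ⟨fun e he => ?_, fun e he => absurd he (by omega)⟩
      have : e = 0 := by omega
      subst this
      simpa using hW
  | succ d ih =>
      intro hno
      obtain ⟨hWs, hus⟩ := ih (fun e h1 h2 => hno e h1 (by omega))
      have hWd : Wnd u k (j + d) = Wnd u k (j' + d) := hWs d le_rfl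
      have hletter : u (j + d + k) = u (j' + d + k) := by
        rcases Nat.eq_zero_or_pos d with hd0 | hd1
        · subst hd0
          simp only [Nat.add_zero]
          by_cases hws : Wnd u k j = ws
          · exact hch0 hws
          · have h1 := Hdet j hws
            have h2 := Hdet j' (by rw [← hW]; exact hws)
            rw [h1, h2, hW]
        · have hnws : Wnd u k (j + d) ≠ ws := hno d hd1 (by omega)
          have h1 := Hdet (j + d) hnws
          have h2 := Hdet (j' + d) (by rw [← hWd]; exact hnws)
          rw [h1, h2, hWd]
      have hWd1 : Wnd u k (j + (d + 1)) = Wnd u k (j' + (d + 1)) := by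
        have := stepW u k (j + d) (j' + d) hWd hletter
        simpa [Nat.add_assoc] using this
      refine ⟨fun e he => ?_, fun e he => ?_⟩
      · rcases Nat.lt_or_ge e (d + 1) with h | h
        · exact hWs e (by omega)
        · have : e = d + 1 := by omega
          subst this; exact hWd1
      · rcases Nat.lt_or_ge e d with h | h
        · exact hus e h
        · have : e = d := by omega
          subst this; exact hletter



variable {m : ℕ}
/-- Abbreviation for the growth hypothesis. -/
def Grow (t : ℝ × ℝ) : Prop :=
  ∀ ℓ₁ ℓ₂ : ℕ, 1 ≤ ℓ₁ → 1 ≤ ℓ₂ → ∀ Δ₁ Δ₂ : ℝ × ℝ, InZt t ℓ₁ Δ₁ → InZt t ℓ₂ Δ₂ →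
    ∃ c > 0, ∀ m₁ m₂ : ℕ,
      c * ((m₁ * ℓ₁ + m₂ * ℓ₂ : ℕ) : ℝ) ≤ ‖(m₁ : ℝ) • Δ₁ + (m₂ : ℝ) • Δ₂‖

lemma case_per (t : ℝ × ℝ) (δ : Fin m → ℝ × ℝ) (u : ℕ → Fin m)
    (hδ : ∀ i, InZt t 1 (δ i)) (hgrow : Grow t)
    (dm : ℝ) (hdm : ∀ i, ‖δ i‖ ≤ dm)
    (j₀ q : ℕ) (hq : 1 ≤ q) (hper : ∀ i, j₀ ≤ i → u (i + q) = u i) :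
    ∀ B : ℝ, ∃ K : ℕ, ∀ N, K ≤ N → B < ‖Ssum δ u N‖ := by
  intro B
  set Δ : ℝ × ℝ := ∑ e ∈ Finset.range q, δ (u (j₀ + e)) with hΔdef
  have hΔin : InZt t q Δ := InZt.block t δ hδ u j₀ q
  obtain ⟨c, hc, hcb⟩ := hgrow q q hq hq Δ Δ hΔin hΔin
  have hΔnorm : c * q ≤ ‖Δ‖ := by
    have := hcb 1 0
    simpa using this
  -- letters repeat with any multiple of q
  have hper_mul : ∀ d i, j₀ ≤ i → u (i + d * q) = u i := by
    intro d
    induction d with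
    | zero => intro i _; simp
    | succ d ih =>
        intro i hi
        have h1 : i + (d + 1) * q = (i + d * q) + q := by ring
        rw [h1, hper (i + d * q) (by omega), ih i hi]
  -- S along multiples
  have hSd : ∀ d : ℕ, Ssum δ u (j₀ + d * q) = Ssum δ u j₀ + (d : ℝ) • Δ := by
    intro d
    induction d with
    | zero => simp
    | succ d ih =>
        have h1 : j₀ + (d + 1) * q = (j₀ + d * q) + q := by ring
        rw [h1, Ssum_add]
        have hblock : ∑ e ∈ Finset.range q, δ (u (j₀ + d * q + e)) = Δ := by
          rw [hΔdef]
          refine Finset.sum_congr rfl fun e he => ?_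
          have h2 : j₀ + d * q + e = (j₀ + e) + d * q := by ring
          rw [h2, hper_mul d (j₀ + e) (by omega)]
        rw [hblock, ih]
        push_cast
        module
  have hdm0 : 0 ≤ dm := le_trans (norm_nonneg _) (hdm (u 0))
  -- choose K
  obtain ⟨K₀, hK₀⟩ := exists_nat_gt ((B + ‖Ssum δ u j₀‖ + q * dm) / c)
  refine ⟨j₀ + q * (K₀ + 1), fun N hN => ?_⟩
  -- decompose N
  set M : ℕ := N - j₀ with hM
  have hNj : N = j₀ + M := by omega
  set d : ℕ := M / q with hd
  set b : ℕ := M % q with hb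
  have hMdb : M = d * q + b := by rw [hd, hb, mul_comm]; exact (Nat.div_add_mod M q).symm
  have hbq : b < q := Nat.mod_lt _ (by omega)
  have hdK : K₀ + 1 ≤ d := by
    have h5 : q * (K₀ + 1) ≤ M := by omega
    exact (Nat.le_div_iff_mul_le (by omega)).2 (by rw [mul_comm]; exact h5)
  have hsplit : N = (j₀ + d * q) + b := by omega
  have h1 : Ssum δ u N = Ssum δ u (j₀ + d * q) + ∑ e ∈ Finset.range b, δ (u ((j₀ + d * q) + e)) := by
    rw [hsplit, Ssum_add]
  have h2 : ‖∑ e ∈ Finset.range b, δ (u ((j₀ + d * q) + e))‖ ≤ q * dm := by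
    calc ‖∑ e ∈ Finset.range b, δ (u ((j₀ + d * q) + e))‖ ≤ b * dm := block_norm δ dm hdm _ _ _
      _ ≤ q * dm := by
          have : (b:ℝ) ≤ q := by exact_mod_cast hbq.le
          nlinarith
  have h3 : (d : ℝ) * ‖Δ‖ ≤ ‖Ssum δ u (j₀ + d * q)‖ + ‖Ssum δ u j₀‖ := by
    have := hSd d
    have hnorm : ‖(d : ℝ) • Δ‖ = (d:ℝ) * ‖Δ‖ := by
      rw [norm_smul, Real.norm_natCast]
    calc (d : ℝ) * ‖Δ‖ = ‖(d : ℝ) • Δ‖ := hnorm.symm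
      _ = ‖Ssum δ u (j₀ + d * q) - Ssum δ u j₀‖ := by rw [this]; congr 1; module
      _ ≤ ‖Ssum δ u (j₀ + d * q)‖ + ‖Ssum δ u j₀‖ := norm_sub_le _ _
  have h4 : ‖Ssum δ u N‖ ≥ ‖Ssum δ u (j₀ + d * q)‖ - q * dm := by
    have := norm_sub_le (Ssum δ u N) (Ssum δ u (j₀ + d * q))
    have heq : Ssum δ u N - Ssum δ u (j₀ + d * q) = ∑ e ∈ Finset.range b, δ (u ((j₀ + d * q) + e)) := by
      rw [h1]; module
    calc ‖Ssum δ u N‖ ≥ ‖Ssum δ u (j₀ + d * q)‖ - ‖Ssum δ u N - Ssum δ u (j₀ + d * q)‖ := by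
          have := norm_sub_norm_le (Ssum δ u N) (Ssum δ u (j₀ + d * q))
          linarith [abs_le.mp (abs_norm_sub_norm_le (Ssum δ u N) (Ssum δ u (j₀ + d * q)))]
      _ ≥ ‖Ssum δ u (j₀ + d * q)‖ - q * dm := by
          rw [heq] at *
          linarith [h2]
  -- conclude
  have hdc : (d : ℝ) * (c * q) ≤ (d:ℝ) * ‖Δ‖ := by
    have hd0 : (0:ℝ) ≤ d := Nat.cast_nonneg d
    nlinarith
  have hdbig : (B + ‖Ssum δ u j₀‖ + q * dm) / c < (d : ℝ) := by
    have : (K₀ : ℝ) ≤ ((d : ℕ) : ℝ) - 1 := by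
      have : (K₀ + 1 : ℕ) ≤ d := hdK
      have := Nat.cast_le (α := ℝ).2 this
      push_cast at this
      linarith
    linarith
  have hq1 : (1:ℝ) ≤ q := by exact_mod_cast hq
  have final : B + ‖Ssum δ u j₀‖ + q * dm < (d:ℝ) * (c * q) := by
    rw [div_lt_iff₀ hc] at hdbig
    nlinarith [hdbig, mul_nonneg (mul_nonneg (Nat.cast_nonneg d) hc.le)
      (by linarith : (0:ℝ) ≤ (q:ℝ) - 1)]
  linarith [h3, h4, hdc, final]



variable {m : ℕ}
lemma case_rec (t : ℝ × ℝ) (δ : Fin m → ℝ × ℝ) (u : ℕ → Fin m)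
    (hδ : ∀ i, InZt t 1 (δ i)) (hgrow : Grow t)
    (dm : ℝ) (hdm : ∀ i, ‖δ i‖ ≤ dm)
    (k : ℕ) (ws : Fin k → Fin m) (F : (Fin k → Fin m) → Fin m) (b₁ b₂ : Fin m)
    (Hdet : ∀ j, Wnd u k j ≠ ws → u (j + k) = F (Wnd u k j))
    (Hch : ∀ j, Wnd u k j = ws → u (j + k) = b₁ ∨ u (j + k) = b₂)
    (hrec : ∀ J : ℕ, ∃ j, J ≤ j ∧ Wnd u k j = ws) :
    ∀ B : ℝ, ∃ K : ℕ, ∀ N, K ≤ N → B < ‖Ssum δ u N‖ := by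
  classical
  have hdm0 : 0 ≤ dm := le_trans (norm_nonneg _) (hdm (u 0))
  -- gaps between occurrences
  have hgapex : ∀ j : ℕ, ∃ g : ℕ, Wnd u k (j + (g + 1)) = ws := by
    intro j
    obtain ⟨j', hj', hw⟩ := hrec (j + 1)
    refine ⟨j' - j - 1, ?_⟩
    have : j + (j' - j - 1 + 1) = j' := by omega
    rw [this]; exact hw
  set gap : ℕ → ℕ := fun j => Nat.find (hgapex j) + 1 with hgapdef
  have hgap1 : ∀ j, 1 ≤ gap j := fun j => by simp [hgapdef]
  have gws : ∀ j, Wnd u k (j + gap j) = ws := fun j => Nat.find_spec (hgapex j)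
  have gmin : ∀ j e, 1 ≤ e → e < gap j → Wnd u k (j + e) ≠ ws := by
    intro j e h1 h2
    have h3 : e - 1 < Nat.find (hgapex j) := by
      simp only [hgapdef] at h2; omega
    have := Nat.find_min (hgapex j) h3
    have he : e - 1 + 1 = e := by omega
    rw [he] at this
    exact this
  -- block sums
  set block : ℕ → ℝ × ℝ := fun j => ∑ e ∈ Finset.range (gap j), δ (u (j + e)) with hblockdef
  -- the return lemma
  have ret : ∀ j j', Wnd u k j = ws → Wnd u k j' = ws → u (j + k) = u (j' + k) →
      gap j = gap j' ∧ block j = block j' := by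
    intro j j' hj hj' hu
    have hW : Wnd u k j = Wnd u k j' := hj.trans hj'.symm
    obtain ⟨hWs, hus⟩ := sync u k ws F Hdet j j' hW (fun _ => hu) (gap j) (gmin j)
    have hgapeq : gap j = gap j' := by
      have hle : gap j' ≤ gap j := by
        by_contra h
        push_neg at h
        exact gmin j' (gap j) (hgap1 j) h (by rw [← hWs (gap j) le_rfl]; exact gws j)
      have hge : gap j ≤ gap j' := by
        by_contra h
        push_neg at h
        exact gmin j (gap j') (hgap1 j') h (by rw [hWs (gap j') h.le]; exact gws j')
      omega
    refine ⟨hgapeq, ?_⟩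
    rw [hblockdef]
    simp only
    rw [← hgapeq]
    refine Finset.sum_congr rfl fun e he => ?_
    rw [Finset.mem_range] at he
    rcases Nat.lt_or_ge e k with hek | hek
    · have h0 : u (j + e) = u (j' + e) := by
        have := congrFun hW ⟨e, hek⟩
        simpa [Wnd] using this
      rw [h0]
    · have he' : e - k < gap j := by omega
      have := hus (e - k) he'
      have h1 : j + (e - k) + k = j + e := by omega
      have h2 : j' + (e - k) + k = j' + e := by omega
      rw [h1, h2] at this
      rw [this]
  -- occurrence sequence
  obtain ⟨j₀, _, hj₀⟩ := hrec 0
  set o : ℕ → ℕ := fun i => Nat.rec j₀ (fun _ prev => prev + gap prev) i with hodef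
  have o0 : o 0 = j₀ := rfl
  have oS : ∀ i, o (i + 1) = o i + gap (o i) := fun i => rfl
  have hows : ∀ i, Wnd u k (o i) = ws := by
    intro i
    induction i with
    | zero => exact hj₀
    | succ i _ => rw [oS i]; exact gws (o i)
  have omono : ∀ i, i ≤ o i := by
    intro i
    induction i with
    | zero => omega
    | succ i ih => rw [oS i]; have := hgap1 (o i); omega
  have oj₀ : ∀ i, j₀ ≤ o i := by
    intro i
    induction i with
    | zero => omega
    | succ i ih => rw [oS i]; omega
  -- class data
  have classdata : ∀ P : ℕ → Prop, (∀ i i', P i → P i' → u (o i + k) = u (o i' + k)) →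
      ∃ (g : ℕ) (Δ : ℝ × ℝ), 1 ≤ g ∧ InZt t g Δ ∧
        ∀ i, P i → gap (o i) = g ∧ block (o i) = Δ := by
    intro P hP
    by_cases hT : ∃ i, P i
    · obtain ⟨i₁, hi₁⟩ := hT
      refine ⟨gap (o i₁), block (o i₁), hgap1 _, InZt.block t δ hδ u _ _, ?_⟩
      intro i hi
      exact ret (o i) (o i₁) (hows i) (hows i₁) (hP i i₁ hi hi₁)
    · exact ⟨1, δ b₁, le_rfl, hδ b₁, fun i hi => absurd ⟨i, hi⟩ hT⟩
  obtain ⟨g1, Δ1, hg1, hΔ1, hcl1⟩ := classdata (fun i => u (o i + k) = b₁)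
    (fun i i' h h' => h.trans h'.symm)
  obtain ⟨g2, Δ2, hg2, hΔ2, hcl2⟩ := classdata (fun i => ¬ u (o i + k) = b₁)
    (by
      intro i i' h h'
      have e1 : u (o i + k) = b₂ := (Hch (o i) (hows i)).resolve_left h
      have e2 : u (o i' + k) = b₂ := (Hch (o i') (hows i')).resolve_left h'
      rw [e1, e2])
  -- counts
  set m1 : ℕ → ℕ := fun i => ((Finset.range i).filter (fun i' => u (o i' + k) = b₁)).card
    with hm1def
  set m2 : ℕ → ℕ := fun i => ((Finset.range i).filter (fun i' => ¬ u (o i' + k) = b₁)).card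
    with hm2def
  have hm1S : ∀ i, (u (o i + k) = b₁ → m1 (i+1) = m1 i + 1 ∧ m2 (i+1) = m2 i) ∧
      (¬ u (o i + k) = b₁ → m1 (i+1) = m1 i ∧ m2 (i+1) = m2 i + 1) := by
    intro i
    constructor
    · intro hcase
      constructor
      · rw [hm1def]
        simp only
        rw [Finset.range_add_one, Finset.filter_insert, if_pos hcase,
          Finset.card_insert_of_notMem (fun hmem =>
            Finset.notMem_range_self (Finset.mem_of_mem_filter _ hmem))]
      · rw [hm2def]
        simp only
        rw [Finset.range_add_one, Finset.filter_insert, if_neg (by simpa using hcase)]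
    · intro hcase
      constructor
      · rw [hm1def]
        simp only
        rw [Finset.range_add_one, Finset.filter_insert, if_neg hcase]
      · rw [hm2def]
        simp only
        rw [Finset.range_add_one, Finset.filter_insert, if_pos hcase,
          Finset.card_insert_of_notMem (fun hmem =>
            Finset.notMem_range_self (Finset.mem_of_mem_filter _ hmem))]
  have hoeq : ∀ i, o i = j₀ + (m1 i) * g1 + (m2 i) * g2 := by
    intro i
    induction i with
    | zero => simp [o0, hm1def, hm2def]
    | succ i ih =>
        rw [oS i]
        by_cases hcase : u (o i + k) = b₁
        · obtain ⟨h1, h2⟩ := (hm1S i).1 hcase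
          rw [h1, h2, (hcl1 i hcase).1, ih]; ring
        · obtain ⟨h1, h2⟩ := (hm1S i).2 hcase
          rw [h1, h2, (hcl2 i hcase).1, ih]; ring
  have hSo : ∀ i, Ssum δ u (o i) = Ssum δ u j₀ + (m1 i : ℝ) • Δ1 + (m2 i : ℝ) • Δ2 := by
    intro i
    induction i with
    | zero => simp [o0, hm1def, hm2def]
    | succ i ih =>
        rw [oS i, Ssum_add]
        have hblock : ∑ e ∈ Finset.range (gap (o i)), δ (u (o i + e)) = block (o i) := rfl
        rw [hblock]
        by_cases hcase : u (o i + k) = b₁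
        · obtain ⟨h1, h2⟩ := (hm1S i).1 hcase
          rw [h1, h2, (hcl1 i hcase).2, ih]
          push_cast
          module
        · obtain ⟨h1, h2⟩ := (hm1S i).2 hcase
          rw [h1, h2, (hcl2 i hcase).2, ih]
          push_cast
          module
  -- growth
  obtain ⟨c, hc, hcb⟩ := hgrow g1 g2 hg1 hg2 Δ1 Δ2 hΔ1 hΔ2
  set G : ℕ := max g1 g2 with hGdef
  have hG1 : 1 ≤ G := le_trans hg1 (le_max_left _ _)
  have gapbound : ∀ i, gap (o i) ≤ G := by
    intro i
    by_cases hcase : u (o i + k) = b₁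
    · rw [(hcl1 i hcase).1]; exact le_max_left _ _
    · rw [(hcl2 i hcase).1]; exact le_max_right _ _
  -- lower bound for ‖Ssum (o i)‖
  have hSolb : ∀ i, c * ((o i : ℝ) - j₀) ≤ ‖Ssum δ u (o i)‖ + ‖Ssum δ u j₀‖ := by
    intro i
    have h1 := hcb (m1 i) (m2 i)
    have h2 : ((m1 i * g1 + m2 i * g2 : ℕ) : ℝ) = (o i : ℝ) - j₀ := by
      have := hoeq i
      have : (o i : ℝ) = (j₀ : ℝ) + ((m1 i * g1 + m2 i * g2 : ℕ) : ℝ) := by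
        rw [hoeq i]; push_cast; ring
      linarith
    rw [h2] at h1
    have h3 : (m1 i : ℝ) • Δ1 + (m2 i : ℝ) • Δ2 = Ssum δ u (o i) - Ssum δ u j₀ := by
      rw [hSo i]; module
    rw [h3] at h1
    calc c * ((o i : ℝ) - j₀) ≤ ‖Ssum δ u (o i) - Ssum δ u j₀‖ := h1
      _ ≤ ‖Ssum δ u (o i)‖ + ‖Ssum δ u j₀‖ := norm_sub_le _ _
  -- choose K
  intro B
  obtain ⟨K₀, hK₀⟩ := exists_nat_gt ((B + ‖Ssum δ u j₀‖ + G * dm) / c)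
  refine ⟨j₀ + G + K₀, fun N hN => ?_⟩
  -- find largest i with o i ≤ N
  have hj₀N : j₀ ≤ N := by omega
  set P : ℕ → Prop := fun i => o i ≤ N with hPdef
  have hP0 : P 0 := by rw [hPdef]; simp only; rw [o0]; exact hj₀N
  set i₀ : ℕ := Nat.findGreatest P N with hi₀def
  have hPi : o i₀ ≤ N := Nat.findGreatest_spec (Nat.zero_le N) hP0
  have hnext : N < o (i₀ + 1) := by
    by_contra h
    push_neg at h
    have h2 : i₀ + 1 ≤ N := le_trans (omono _) h
    have h3 := Nat.le_findGreatest (P := P) h2 h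
    rw [← hi₀def] at h3
    omega
  -- bound ‖Ssum N‖ from below
  have hNoi : N = o i₀ + (N - o i₀) := by omega
  have hb' : N - o i₀ ≤ G := by
    have := oS i₀
    have := gapbound i₀
    omega
  have h1 : Ssum δ u N = Ssum δ u (o i₀) + ∑ e ∈ Finset.range (N - o i₀), δ (u (o i₀ + e)) := by
    conv_lhs => rw [hNoi]
    rw [Ssum_add]
  have h2 : ‖∑ e ∈ Finset.range (N - o i₀), δ (u (o i₀ + e))‖ ≤ (G:ℝ) * dm := by
    have hb1 := block_norm δ dm hdm u (o i₀) (N - o i₀)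
    have hb2 : ((N - o i₀ : ℕ):ℝ) ≤ (G:ℝ) := by exact_mod_cast hb'
    nlinarith
  have h3 : ‖Ssum δ u N‖ ≥ ‖Ssum δ u (o i₀)‖ - G * dm := by
    have heq : Ssum δ u N - Ssum δ u (o i₀) = ∑ e ∈ Finset.range (N - o i₀), δ (u (o i₀ + e)) := by
      rw [h1]; module
    have := abs_le.mp (abs_norm_sub_norm_le (Ssum δ u N) (Ssum δ u (o i₀)))
    rw [heq] at this
    linarith [this.1, h2]
  -- o i₀ is large
  have h4 : (N : ℝ) + 1 - G ≤ (o i₀ : ℝ) := by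
    have e1 : o i₀ + gap (o i₀) ≥ N + 1 := by rw [← oS i₀]; omega
    have e2 : gap (o i₀) ≤ G := gapbound i₀
    have : (N:ℝ) + 1 ≤ (o i₀ : ℝ) + (G:ℝ) := by
      have : N + 1 ≤ o i₀ + G := by omega
      exact_mod_cast this
    linarith
  have h5 : (B + ‖Ssum δ u j₀‖ + G * dm) < c * ((o i₀ : ℝ) - j₀) := by
    rw [div_lt_iff₀ hc] at hK₀
    have e1 : (K₀ : ℝ) + 1 ≤ (o i₀ : ℝ) - j₀ := by
      have : (j₀ : ℝ) + G + K₀ ≤ (N:ℝ) := by exact_mod_cast hN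
      linarith
    nlinarith
  linarith [hSolb i₀, h3, h5]



variable {m : ℕ}
theorem combin (t : ℝ × ℝ) (δ : Fin m → ℝ × ℝ) (u : ℕ → Fin m)
    (hδ : ∀ i, InZt t 1 (δ i)) (hgrow : Grow t)
    (dm : ℝ) (hdm : ∀ i, ‖δ i‖ ≤ dm)
    (k : ℕ) (ws : Fin k → Fin m) (F : (Fin k → Fin m) → Fin m) (b₁ b₂ : Fin m)
    (Hdet : ∀ j, Wnd u k j ≠ ws → u (j + k) = F (Wnd u k j))
    (Hch : ∀ j, Wnd u k j = ws → u (j + k) = b₁ ∨ u (j + k) = b₂) :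
    ∀ B : ℝ, ∃ K : ℕ, ∀ N, K ≤ N → B < ‖Ssum δ u N‖ := by
  by_cases hrec : ∀ J : ℕ, ∃ j, J ≤ j ∧ Wnd u k j = ws
  · exact case_rec t δ u hδ hgrow dm hdm k ws F b₁ b₂ Hdet Hch hrec
  · push_neg at hrec
    obtain ⟨J, hJ⟩ := hrec
    have hJ' : ∀ j, J ≤ j → Wnd u k j ≠ ws := fun j hj => hJ j hj
    -- pigeonhole on windows after J
    obtain ⟨p, q', hpq, hWeq⟩ : ∃ p q' : ℕ, p < q' ∧ Wnd u k (J + p) = Wnd u k (J + q') := by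
      obtain ⟨n, n', hne, hf⟩ := Fintype.exists_ne_map_eq_of_card_lt
        (fun n : Fin (Fintype.card (Fin k → Fin m) + 1) => Wnd u k (J + n)) (by simp)
      rcases lt_or_gt_of_ne (fun h : (n : ℕ) = (n' : ℕ) => hne (Fin.ext h)) with h | h
      · exact ⟨n, n', h, hf⟩
      · exact ⟨n', n, h, hf.symm⟩
    set j : ℕ := J + p with hjdef
    set j' : ℕ := J + q' with hj'def
    set q : ℕ := q' - p with hqdef
    have hq1 : 1 ≤ q := by omega
    have hj'j : j' = j + q := by omega
    have hletters : ∀ e : ℕ, u (j + e + k) = u (j' + e + k) := by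
      intro e
      have := sync u k ws F Hdet j j' hWeq
        (fun h => absurd h (hJ' j (by omega)))
        (e + 1) (fun e' h1 h2 => hJ' (j + e') (by omega))
      exact this.2 e (by omega)
    have hper : ∀ i, j + k ≤ i → u (i + q) = u i := by
      intro i hi
      have he : i = j + (i - j - k) + k := by omega
      have := hletters (i - j - k)
      rw [← he] at this
      have h2 : j' + (i - j - k) + k = i + q := by omega
      rw [h2] at this
      exact this.symm
    exact case_per t δ u hδ hgrow dm hdm (j + k) q hq1 hper



/-- cells by codes of pieces -/
def Dcell (E : PieceExchange T m) {n : ℕ} (w : Fin n → Fin m) : Set (ℝ × ℝ) :=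
  ⋂ i : Fin n, (E.R^[(i : ℕ)]) ⁻¹' (E.D (w i))

lemma measR_iter (E : PieceExchange T m) (N : ℕ) : Measurable (E.R^[N]) :=
  E.measR.iterate N

lemma measDcell (E : PieceExchange T m) {n : ℕ} (w : Fin n → Fin m) :
    MeasurableSet (Dcell E w) :=
  MeasurableSet.iInter fun i => (measR_iter E i) (E.measD (w i))

lemma measDomain (E : PieceExchange T m) : MeasurableSet E.domain :=
  MeasurableSet.iUnion fun i => E.measD i

open Classical in
/-- positive-measure words of length `n` -/
def Lp (E : PieceExchange T m) (n : ℕ) : Finset (Fin n → Fin m) :=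
  Finset.univ.filter (fun w => 0 < volume (E.domain ∩ Dcell E w))

lemma mem_Lp (E : PieceExchange T m) {n : ℕ} (w : Fin n → Fin m) :
    w ∈ Lp E n ↔ 0 < volume (E.domain ∩ Dcell E w) := by
  simp [Lp]

/-- iterated measure preservation -/
lemma meas_pres_iter (E : PieceExchange T m) (N : ℕ) (A : Set (ℝ × ℝ))
    (hA : MeasurableSet A) :
    volume (E.domain ∩ (E.R^[N]) ⁻¹' A) = volume (E.domain ∩ A) := by
  induction N with
  | zero => simp
  | succ N ih =>
      have h1 : (E.R^[N+1]) ⁻¹' A = E.R ⁻¹' ((E.R^[N]) ⁻¹' A) := by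
        rw [Function.iterate_succ]
        exact Set.preimage_comp
      have h2 : volume (E.domain ∩ E.R ⁻¹' ((E.R^[N]) ⁻¹' A))
          = volume (E.domain ∩ (E.R^[N]) ⁻¹' A) := E.meas_pres _ ((measR_iter E N) hA)
      rw [h1, h2, ih]

/-- overlaps of pieces -/
def Jset (E : PieceExchange T m) : Set (ℝ × ℝ) :=
  ⋃ (i : Fin m) (j : Fin m) (_ : i ≠ j), E.D i ∩ E.D j

lemma measJset (E : PieceExchange T m) : MeasurableSet (Jset E) :=
  MeasurableSet.iUnion fun i => MeasurableSet.iUnion fun j =>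
    MeasurableSet.iUnion fun _ => (E.measD i).inter (E.measD j)

lemma volJset (E : PieceExchange T m) : volume (Jset E) = 0 := by
  refine measure_iUnion_null fun i => measure_iUnion_null fun j => measure_iUnion_null fun h =>
    E.aeDisjoint i j h

/-- bad set -/
def Bad (E : PieceExchange T m) : Set (ℝ × ℝ) :=
  (⋃ n : ℕ, E.domain ∩ (E.R^[n]) ⁻¹' (Jset E)) ∪
    (⋃ (n : ℕ) (j : ℕ) (w : Fin n → Fin m) (_ : volume (E.domain ∩ Dcell E w) = 0),
      E.domain ∩ (E.R^[j]) ⁻¹' (Dcell E w))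

lemma volBad (E : PieceExchange T m) : volume (Bad E) = 0 := by
  refine measure_union_null ?_ ?_
  · refine measure_iUnion_null fun n => ?_
    rw [meas_pres_iter E n _ (measJset E)]
    exact measure_inter_null_of_null_right _ (volJset E)
  · refine measure_iUnion_null fun n => measure_iUnion_null fun j =>
      measure_iUnion_null fun w => measure_iUnion_null fun hw => ?_
    rw [meas_pres_iter E j _ (measDcell E w)]
    exact hw

/-- good set -/
def Good (E : PieceExchange T m) : Set (ℝ × ℝ) := E.domain \ Bad E

lemma volGood (E : PieceExchange T m) : volume (Good E) = 1 := by
  rw [Good, measure_diff_null (volBad E)]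
  exact E.measure_union

lemma measGood (E : PieceExchange T m) : MeasurableSet (Good E) := by
  refine (measDomain E).diff ?_
  refine MeasurableSet.union (MeasurableSet.iUnion fun n => (measDomain E).inter
    ((measR_iter E n) (measJset E))) ?_
  exact MeasurableSet.iUnion fun n => MeasurableSet.iUnion fun j =>
    MeasurableSet.iUnion fun w => MeasurableSet.iUnion fun _ =>
      (measDomain E).inter ((measR_iter E j) (measDcell E w))

lemma Good_subset (E : PieceExchange T m) : Good E ⊆ E.domain := Set.diff_subset

/-- on the good set, codes are unique -/
lemma Good_uniq (E : PieceExchange T m) {x : ℝ × ℝ} (hx : x ∈ Good E)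
    (n : ℕ) (i : Fin m) (hi : E.R^[n] x ∈ E.D i) : E.C x n = i := by
  by_contra hne
  have hmem := E.mem_code x (Good_subset E hx) n
  have : E.R^[n] x ∈ Jset E := by
    refine Set.mem_iUnion.2 ⟨E.C x n, Set.mem_iUnion.2 ⟨i, Set.mem_iUnion.2 ⟨hne, hmem, hi⟩⟩⟩
  exact hx.2 (Set.mem_union_left _ (Set.mem_iUnion.2 ⟨n, ⟨hx.1, this⟩⟩))

/-- on the good set, all windows are positive words -/
lemma Good_window (E : PieceExchange T m) {x : ℝ × ℝ} (hx : x ∈ Good E)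
    (j n : ℕ) : (fun i : Fin n => E.C x (j + i)) ∈ Lp E n := by
  set w : Fin n → Fin m := fun i => E.C x (j + i) with hw
  have hxcell : x ∈ E.domain ∩ (E.R^[j]) ⁻¹' (Dcell E w) := by
    refine ⟨hx.1, ?_⟩
    simp only [Set.mem_preimage, Dcell, Set.mem_iInter]
    intro i
    rw [← Function.iterate_add_apply, add_comm (i : ℕ) j]
    exact E.mem_code x (Good_subset E hx) (j + i)
  rw [mem_Lp]
  rcases eq_or_ne (volume (E.domain ∩ Dcell E w)) 0 with h0 | h0
  · exfalso
    refine hx.2 (Set.mem_union_right _ ?_)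
    exact Set.mem_iUnion.2 ⟨n, Set.mem_iUnion.2 ⟨j, Set.mem_iUnion.2 ⟨w,
      Set.mem_iUnion.2 ⟨h0, hxcell⟩⟩⟩⟩
  · exact pos_iff_ne_zero.2 h0



open scoped ENNReal
/-- displacement vectors of an exchange adapted to the translation by (r,s) -/
def delE (r s : ℝ) (E : PieceExchange T m) : Fin m → ℝ × ℝ :=
  fun i => ((r, s) : ℝ × ℝ) - latVec (E.vec i)

lemma m_pos (E : PieceExchange T m) : 0 < m := by
  rcases Nat.eq_zero_or_pos m with h | h
  · exfalso
    have h1 := E.measure_union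
    subst h
    rw [Set.iUnion_of_empty] at h1
    simp at h1
  · exact h

lemma iterate_eq {r s : ℝ} (E : PieceExchange (fun x : ℝ × ℝ => (x.1 + r, x.2 + s)) m)
    (x : ℝ × ℝ) (hx : x ∈ E.domain) (N : ℕ) :
    E.R^[N] x = x + Ssum (delE r s E) (E.C x) N := by
  induction N with
  | zero => simp [Ssum]
  | succ N ih =>
      rw [Function.iterate_succ_apply', E.R_eq x hx N, ih]
      have h2 : Ssum (delE r s E) (E.C x) (N + 1)
          = Ssum (delE r s E) (E.C x) N + ((r, s) - latVec (E.vec (E.C x N))) := by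
        rw [Ssum, Finset.sum_range_succ, ← Ssum]
        rfl
      rw [h2, Prod.ext_iff]
      constructor <;> simp [latVec] <;> ring

/-- tightness -/
lemma tight (E : PieceExchange T m) :
    ∃ Mb : ℝ, 0 < Mb ∧ ∀ N : ℕ, ENNReal.ofReal (1/2) ≤
      volume ((E.domain ∩ (E.R^[N]) ⁻¹' (Metric.closedBall 0 Mb)) ∩ Metric.closedBall 0 Mb) := by
  -- find a ball capturing most of the domain
  have hcup : (⋃ k : ℕ, E.domain ∩ Metric.closedBall 0 (k+1)) = E.domain := by
    ext x
    simp only [Set.mem_iUnion, Set.mem_inter_iff]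
    constructor
    · rintro ⟨k, hk, _⟩; exact hk
    · intro hx
      obtain ⟨k, hk⟩ := exists_nat_ge ‖x‖
      exact ⟨k, hx, by
        rw [Metric.mem_closedBall, dist_zero_right]
        linarith⟩
  have hmono : Monotone (fun k : ℕ => E.domain ∩ Metric.closedBall 0 (k+1)) := by
    intro a b hab
    apply Set.inter_subset_inter_right
    apply Metric.closedBall_subset_closedBall
    have : (a:ℝ) ≤ b := by exact_mod_cast hab
    linarith
  have hvolDom : volume E.domain = 1 := E.measure_union
  have hsup : (⨆ k : ℕ, volume (E.domain ∩ Metric.closedBall 0 (k+1))) = 1 := by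
    rw [← hmono.directed_le.measure_iUnion, hcup, hvolDom]
  have hlt : ENNReal.ofReal (3/4) < ⨆ k : ℕ, volume (E.domain ∩ Metric.closedBall 0 (k+1)) := by
    rw [hsup]
    rw [show (1 : ℝ≥0∞) = ENNReal.ofReal 1 by simp]
    rw [ENNReal.ofReal_lt_ofReal_iff (by norm_num)]
    norm_num
  rw [lt_iSup_iff] at hlt
  obtain ⟨k, hk⟩ := hlt
  refine ⟨k + 1, by positivity, fun N => ?_⟩
  set Mb : ℝ := (k:ℝ) + 1 with hMb
  set A : Set (ℝ × ℝ) := E.domain ∩ Metric.closedBall 0 Mb with hA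
  set B : Set (ℝ × ℝ) := E.domain ∩ (E.R^[N]) ⁻¹' (Metric.closedBall 0 Mb) with hB
  have hvolB : ENNReal.ofReal (3/4) < volume B :=
    lt_of_lt_of_le hk (le_of_eq (meas_pres_iter E N _ measurableSet_closedBall).symm)
  have hmeasA : MeasurableSet A := (measDomain E).inter measurableSet_closedBall
  have hkey : volume (B ∪ A) + volume (B ∩ A) = volume B + volume A :=
    measure_union_add_inter B hmeasA
  have hBA : volume (B ∪ A) ≤ 1 := by
    rw [← hvolDom]
    refine measure_mono ?_
    rintro x (⟨hx, _⟩ | ⟨hx, _⟩) <;> exact hx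
  have hsum : ENNReal.ofReal (3/4) + ENNReal.ofReal (3/4) ≤ volume B + volume A :=
    add_le_add hvolB.le hk.le
  have h32 : ENNReal.ofReal (3/4) + ENNReal.ofReal (3/4) = 1 + ENNReal.ofReal (1/2) := by
    rw [← ENNReal.ofReal_add (by norm_num) (by norm_num)]
    rw [show (1:ℝ≥0∞) = ENNReal.ofReal 1 by simp]
    rw [← ENNReal.ofReal_add (by norm_num) (by norm_num)]
    norm_num
  have hfinal : 1 + ENNReal.ofReal (1/2) ≤ 1 + volume (B ∩ A) := by
    calc 1 + ENNReal.ofReal (1/2) = ENNReal.ofReal (3/4) + ENNReal.ofReal (3/4) := h32.symm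
      _ ≤ volume B + volume A := hsum
      _ = volume (B ∪ A) + volume (B ∩ A) := hkey.symm
      _ ≤ 1 + volume (B ∩ A) := add_le_add_left hBA _
  have hgoal := (ENNReal.add_le_add_iff_left ENNReal.one_ne_top).1 hfinal
  have hseteq : B ∩ A = (E.domain ∩ (E.R^[N]) ⁻¹' (Metric.closedBall 0 Mb)) ∩
      Metric.closedBall 0 Mb := by
    rw [hB, hA]
    ext z
    simp only [Set.mem_inter_iff]
    tauto
  exact le_trans hgoal (le_of_eq (congrArg volume hseteq))

/-- pigeonhole for extension counts -/
lemma pigeon {α : Type*} [DecidableEq α] (s : Finset α) (f : α → ℕ)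
    (h1 : ∀ w ∈ s, 1 ≤ f w) (h2 : ∑ w ∈ s, f w ≤ s.card + 1) (a₀ : α) :
    ∃ w₀, (∀ w ∈ s, w ≠ w₀ → f w ≤ 1) ∧ (w₀ ∈ s → f w₀ ≤ 2) := by
  have hbound : ∀ t : Finset α, t ⊆ s → t.card ≤ ∑ w ∈ t, f w := by
    intro t ht
    calc t.card = ∑ _w ∈ t, 1 := by simp
      _ ≤ ∑ w ∈ t, f w := Finset.sum_le_sum fun w hw => h1 w (ht hw)
  by_cases hone : ∃ w ∈ s, 2 ≤ f w
  · obtain ⟨w₀, hw₀s, hw₀⟩ := hone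
    refine ⟨w₀, fun w hws hwne => ?_, fun _ => ?_⟩
    · by_contra hc
      push_neg at hc
      have he1 : w₀ ∈ s.erase w := Finset.mem_erase.2 ⟨fun h => hwne h.symm, hw₀s⟩
      have key : s.card + 2 ≤ ∑ w ∈ s, f w := by
        rw [← Finset.add_sum_erase s f hws, ← Finset.add_sum_erase _ f he1]
        have h3 := hbound ((s.erase w).erase w₀)
          (Finset.Subset.trans (Finset.erase_subset _ _) (Finset.erase_subset _ _))
        have h4 : ((s.erase w).erase w₀).card = s.card - 2 := by
          rw [Finset.card_erase_of_mem he1, Finset.card_erase_of_mem hws]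
          omega
        have h5 : 2 ≤ s.card := by
          have := Finset.card_le_card (show {w, w₀} ⊆ s by
            intro z hz
            rcases Finset.mem_insert.1 hz with h | h
            · subst h; exact hws
            · rw [Finset.mem_singleton.1 h]; exact hw₀s)
          rw [Finset.card_insert_of_notMem (by simp [hwne]), Finset.card_singleton] at this
          omega
        omega
      omega
    · by_contra hc
      push_neg at hc
      have key : s.card + 2 ≤ ∑ w ∈ s, f w := by
        rw [← Finset.add_sum_erase s f hw₀s]
        have h3 := hbound (s.erase w₀) (Finset.erase_subset _ _)
        have h4 : (s.erase w₀).card = s.card - 1 := Finset.card_erase_of_mem hw₀s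
        have h5 : 1 ≤ s.card := Finset.card_pos.2 ⟨w₀, hw₀s⟩
        omega
      omega
  · push_neg at hone
    exact ⟨a₀, fun w hws _ => by have := hone w hws; omega,
      fun h => by have := hone a₀ h; omega⟩

/-- any finset of card ≤ 2 is covered by two elements -/
lemma two_cover {β : Type*} [DecidableEq β] (Y : Finset β) (hY : Y.card ≤ 2) (junk : β) :
    ∃ b₁ b₂ : β, ∀ a ∈ Y, a = b₁ ∨ a = b₂ := by
  rcases Y.eq_empty_or_nonempty with h | ⟨b₁, hb₁⟩
  · exact ⟨junk, junk, fun a ha => by simp [h] at ha⟩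
  · rcases (Y.erase b₁).eq_empty_or_nonempty with h2 | ⟨b₂, hb₂⟩
    · refine ⟨b₁, b₁, fun a ha => ?_⟩
      left
      by_contra hne
      have : a ∈ Y.erase b₁ := Finset.mem_erase.2 ⟨hne, ha⟩
      simp [h2] at this
    · refine ⟨b₁, b₂, fun a ha => ?_⟩
      by_cases hab : a = b₁
      · exact Or.inl hab
      · right
        have ha' : a ∈ Y.erase b₁ := Finset.mem_erase.2 ⟨hab, ha⟩
        have hcard : (Y.erase b₁).card ≤ 1 := by
          rw [Finset.card_erase_of_mem hb₁]
          omega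
        exact Finset.card_le_one.1 hcard a ha' b₂ hb₂


lemma init_mem (E : PieceExchange T m) (k : ℕ) :
    ∀ u ∈ Lp E (k+1), Fin.init u ∈ Lp E k := by
  intro u hu
  rw [mem_Lp] at hu ⊢
  refine lt_of_lt_of_le hu (measure_mono ?_)
  refine Set.inter_subset_inter_right _ ?_
  intro x hx
  simp only [Dcell, Set.mem_iInter] at hx ⊢
  intro i
  have h1 := hx (Fin.castSucc i)
  have h2 : Fin.init u i = u (Fin.castSucc i) := rfl
  rw [h2]
  simpa [Fin.coe_castSucc] using h1

lemma ext_mem (E : PieceExchange T m) (k : ℕ) :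
    ∀ w ∈ Lp E k, ∃ a, Fin.snoc w a ∈ Lp E (k+1) := by
  intro w hw
  rw [mem_Lp] at hw
  have hpos : volume ((E.domain ∩ Dcell E w) \ Bad E) ≠ 0 := by
    rw [measure_diff_null (volBad E)]; exact hw.ne'
  obtain ⟨x, hx⟩ := nonempty_of_measure_ne_zero hpos
  have hxGood : x ∈ Good E := ⟨hx.1.1, hx.2⟩
  have hletters : ∀ i : Fin k, E.C x i = w i := by
    intro i
    refine Good_uniq E hxGood i (w i) ?_
    have h3 := hx.1.2
    simp only [Dcell, Set.mem_iInter] at h3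
    exact h3 i
  refine ⟨E.C x k, ?_⟩
  have h := Good_window E hxGood 0 (k+1)
  have heq : (fun i : Fin (k+1) => E.C x (0 + (i:ℕ))) = Fin.snoc w (E.C x k) := by
    funext i
    refine Fin.lastCases ?_ (fun j => ?_) i
    · rw [Fin.snoc_last]
      simp [Fin.val_last]
    · rw [Fin.snoc_castSucc, ← hletters j]
      simp [Fin.coe_castSucc]
  rw [← heq]
  exact h

lemma card0 (E : PieceExchange T m) : (Lp E 0).card = 1 := by
  rw [Finset.card_eq_one]
  refine ⟨(fun i => i.elim0), ?_⟩
  rw [Finset.eq_singleton_iff_unique_mem]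
  constructor
  · rw [mem_Lp]
    have h1 : Dcell E (fun i : Fin 0 => i.elim0) = Set.univ := by
      simp [Dcell]
    have h2 : volume E.domain = 1 := E.measure_union
    rw [h1, Set.inter_univ, h2]
    norm_num
  · intro w _
    funext i
    exact i.elim0

lemma extraction (E : PieceExchange T m) (k : ℕ)
    (hcard : (Lp E (k+1)).card ≤ (Lp E k).card + 1) :
    ∃ (ws : Fin k → Fin m) (F : (Fin k → Fin m) → Fin m) (b₁ b₂ : Fin m),
      ∀ w a, w ∈ Lp E k → Fin.snoc w a ∈ Lp E (k+1) →
        (w ≠ ws → a = F w) ∧ (w = ws → a = b₁ ∨ a = b₂) := by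
  classical
  have hm := m_pos E
  have junk : Fin m := ⟨0, hm⟩
  set X : (Fin k → Fin m) → Finset (Fin m) :=
    fun w => Finset.univ.filter (fun a => Fin.snoc w a ∈ Lp E (k+1)) with hX
  have hXmem : ∀ w a, a ∈ X w ↔ Fin.snoc w a ∈ Lp E (k+1) := by
    intro w a; rw [hX]; simp
  have hfib : ∀ w ∈ Lp E k,
      ((Lp E (k+1)).filter (fun u => Fin.init u = w)).card = (X w).card := by
    intro w hw
    refine Finset.card_bij (fun u _ => u (Fin.last k)) ?_ ?_ ?_
    · intro u hu
      show u (Fin.last k) ∈ X w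
      rw [hXmem]
      obtain ⟨huL, huw⟩ := Finset.mem_filter.1 hu
      rw [← huw, Fin.snoc_init_self]
      exact huL
    · intro u1 h1 u2 h2 heq
      have heq' : u1 (Fin.last k) = u2 (Fin.last k) := heq
      obtain ⟨_, h1w⟩ := Finset.mem_filter.1 h1
      obtain ⟨_, h2w⟩ := Finset.mem_filter.1 h2
      rw [← Fin.snoc_init_self u1, ← Fin.snoc_init_self u2, h1w, h2w, heq']
    · intro a ha
      rw [hXmem] at ha
      refine ⟨Fin.snoc w a, Finset.mem_filter.2 ⟨ha, ?_⟩, ?_⟩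
      · rw [Fin.init_snoc]
      · simp
  have hsum : ∑ w ∈ Lp E k, (X w).card = (Lp E (k+1)).card := by
    have h0 := Finset.card_eq_sum_card_fiberwise
      (f := fun u : Fin (k+1) → Fin m => Fin.init u) (s := Lp E (k+1)) (t := Lp E k)
      (init_mem E k)
    rw [h0]
    exact (Finset.sum_congr rfl fun w hw => (hfib w hw)).symm
  obtain ⟨w₀, hw1, hw2⟩ := pigeon (Lp E k) (fun w => (X w).card)
    (fun w hw => by
      obtain ⟨a, ha⟩ := ext_mem E k w hw
      exact Finset.card_pos.2 ⟨a, (hXmem w a).2 ha⟩)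
    (by rw [hsum]; exact hcard) (fun _ => junk)
  set F : (Fin k → Fin m) → Fin m :=
    fun w => if h : (X w).Nonempty then h.choose else junk with hF
  have hFmem : ∀ w, (X w).Nonempty → F w ∈ X w := by
    intro w h
    rw [hF]
    simp only
    rw [dif_pos h]
    exact h.choose_spec
  have hdet : ∀ w a, w ∈ Lp E k → Fin.snoc w a ∈ Lp E (k+1) → w ≠ w₀ → a = F w := by
    intro w a hw ha hne
    have haX : a ∈ X w := (hXmem w a).2 ha
    exact Finset.card_le_one.1 (hw1 w hw hne) a haX (F w) (hFmem w ⟨a, haX⟩)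
  by_cases hw₀ : w₀ ∈ Lp E k
  · obtain ⟨b₁, b₂, hcov⟩ := two_cover (X w₀) (hw2 hw₀) junk
    refine ⟨w₀, F, b₁, b₂, fun w a hw ha => ⟨hdet w a hw ha, fun heq => ?_⟩⟩
    subst heq
    exact hcov a ((hXmem w a).2 ha)
  · refine ⟨w₀, F, junk, junk, fun w a hw ha => ⟨hdet w a hw ha, fun heq => ?_⟩⟩
    subst heq
    exact absurd hw hw₀

lemma card_step {r s : ℝ}
    (hirr : ∀ p q : ℤ, (p, q) ≠ (0, 0) → ∀ k : ℤ, (p : ℝ) * r + (q : ℝ) * s ≠ (k : ℝ))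
    (E : PieceExchange (fun x : ℝ × ℝ => (x.1 + r, x.2 + s)) m) (k : ℕ) :
    (Lp E k).card + 2 ≤ (Lp E (k+1)).card := by
  classical
  by_contra hcon
  push_neg at hcon
  have hcard : (Lp E (k+1)).card ≤ (Lp E k).card + 1 := by omega
  obtain ⟨ws, F, b₁, b₂, hdata⟩ := extraction E k hcard
  have hgrow : Grow ((r, s) : ℝ × ℝ) := fun ℓ₁ ℓ₂ h1 h2 Δ1 Δ2 hin1 hin2 =>
    growth r s hirr ℓ₁ ℓ₂ h1 h2 Δ1 Δ2 hin1 hin2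
  have hδ : ∀ i, InZt ((r, s) : ℝ × ℝ) 1 (delE r s E i) := fun i =>
    ⟨E.vec i, by rw [delE]; simp⟩
  obtain ⟨dm, hdm'⟩ := Finset.exists_le (Finset.univ.image fun i => ‖delE r s E i‖)
  have hdm : ∀ i, ‖delE r s E i‖ ≤ dm := fun i =>
    hdm' _ (Finset.mem_image_of_mem _ (Finset.mem_univ i))
  obtain ⟨Mb, hMb, htight⟩ := tight E
  set EK : ℕ → Set (ℝ × ℝ) := fun K =>
    {x | x ∈ Good E ∧ ∀ N, K ≤ N → 2 * Mb + 1 < ‖E.R^[N] x - x‖} with hEK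
  have hEKmeas : ∀ K, MeasurableSet (EK K) := by
    intro K
    have heq : EK K = Good E ∩ ⋂ (N : ℕ), ⋂ (_ : K ≤ N),
        {x | 2 * Mb + 1 < ‖E.R^[N] x - x‖} := by
      ext z
      simp only [hEK, Set.mem_setOf_eq, Set.mem_inter_iff, Set.mem_iInter]
    rw [heq]
    exact (measGood E).inter (MeasurableSet.iInter fun N => MeasurableSet.iInter fun _ =>
      measurableSet_lt measurable_const (((measR_iter E N).sub measurable_id).norm))
  have hEKmono : Monotone EK := fun K K' h x hx => ⟨hx.1, fun N hN => hx.2 N (le_trans h hN)⟩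
  have hcover : Good E ⊆ ⋃ K, EK K := by
    intro x hx
    have hWin : ∀ j, Wnd (E.C x) k j ∈ Lp E k := fun j => Good_window E hx j k
    have hWinS : ∀ j, Fin.snoc (Wnd (E.C x) k j) (E.C x (j + k)) ∈ Lp E (k+1) := by
      intro j
      have h := Good_window E hx j (k+1)
      have heq : (fun i : Fin (k+1) => E.C x (j + (i:ℕ)))
          = Fin.snoc (Wnd (E.C x) k j) (E.C x (j + k)) := by
        funext i
        refine Fin.lastCases ?_ (fun j' => ?_) i
        · rw [Fin.snoc_last]
          simp [Fin.val_last]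
        · rw [Fin.snoc_castSucc]
          simp [Wnd, Fin.coe_castSucc]
      rw [← heq]
      exact h
    have Hdet : ∀ j, Wnd (E.C x) k j ≠ ws → E.C x (j + k) = F (Wnd (E.C x) k j) :=
      fun j h => (hdata _ _ (hWin j) (hWinS j)).1 h
    have Hch : ∀ j, Wnd (E.C x) k j = ws → E.C x (j + k) = b₁ ∨ E.C x (j + k) = b₂ :=
      fun j h => (hdata _ _ (hWin j) (hWinS j)).2 h
    obtain ⟨K, hK⟩ := combin ((r, s) : ℝ × ℝ) (delE r s E) (E.C x) hδ hgrow dm hdm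
      k ws F b₁ b₂ Hdet Hch (2 * Mb + 1)
    refine Set.mem_iUnion.2 ⟨K, hx, fun N hN => ?_⟩
    have hsr : E.R^[N] x - x = Ssum (delE r s E) (E.C x) N := by
      rw [iterate_eq E x (Good_subset E hx) N]
      abel
    rw [hsr]
    exact hK N hN
  have hvolDom : volume E.domain = 1 := E.measure_union
  have hcoverv : (1 : ℝ≥0∞) ≤ volume (⋃ K, EK K) := by
    rw [← volGood E]
    exact measure_mono hcover
  have hsupEK : ENNReal.ofReal (3/4) < ⨆ K, volume (EK K) := by
    rw [← hEKmono.directed_le.measure_iUnion]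
    refine lt_of_lt_of_le ?_ hcoverv
    rw [show (1 : ℝ≥0∞) = ENNReal.ofReal 1 by simp,
      ENNReal.ofReal_lt_ofReal_iff (by norm_num)]
    norm_num
  obtain ⟨K, hEKbig⟩ := lt_iSup_iff.1 hsupEK
  set SN : Set (ℝ × ℝ) := (E.domain ∩ (E.R^[K]) ⁻¹' (Metric.closedBall 0 Mb)) ∩
    Metric.closedBall 0 Mb with hSN
  have hSNmeas : MeasurableSet SN :=
    (((measDomain E).inter ((measR_iter E K) measurableSet_closedBall)).inter
      measurableSet_closedBall)
  have hdisj : Disjoint (EK K) SN := by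
    rw [Set.disjoint_left]
    intro x hxE hxS
    have h1 := hxE.2 K le_rfl
    have h2 : ‖E.R^[K] x‖ ≤ Mb := by
      have := hxS.1.2
      rwa [Set.mem_preimage, Metric.mem_closedBall, dist_zero_right] at this
    have h3 : ‖x‖ ≤ Mb := by
      have := hxS.2
      rwa [Metric.mem_closedBall, dist_zero_right] at this
    have h4 := norm_sub_le (E.R^[K] x) x
    linarith
  have hge : ENNReal.ofReal (3/4) + ENNReal.ofReal (1/2) ≤ volume (EK K ∪ SN) := by
    rw [measure_union hdisj hSNmeas]
    exact add_le_add hEKbig.le (htight K)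
  have hle : volume (EK K ∪ SN) ≤ 1 := by
    rw [← hvolDom]
    refine measure_mono ?_
    rintro x (hx | hx)
    · exact Good_subset E hx.1
    · exact hx.1.1
  have hcontr : ENNReal.ofReal (3/4 + 1/2) ≤ 1 := by
    rw [ENNReal.ofReal_add (by norm_num) (by norm_num)]
    exact le_trans hge hle
  rw [ENNReal.ofReal_le_one] at hcontr
  norm_num at hcontr

lemma card_ge {r s : ℝ}
    (hirr : ∀ p q : ℤ, (p, q) ≠ (0, 0) → ∀ k : ℤ, (p : ℝ) * r + (q : ℝ) * s ≠ (k : ℝ))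
    (E : PieceExchange (fun x : ℝ × ℝ => (x.1 + r, x.2 + s)) m) :
    ∀ n : ℕ, 2 * n + 1 ≤ (Lp E n).card := by
  intro n
  induction n with
  | zero => rw [card0 E]
  | succ n ih =>
      have := card_step hirr E n
      omega

lemma word_in_lang (E : PieceExchange T m) {n : ℕ} (w : Fin n → Fin m) (hw : w ∈ Lp E n) :
    List.ofFn w ∈ E.lang ∧ (List.ofFn w).length = n := by
  rw [mem_Lp] at hw
  have hpos : volume ((E.domain ∩ Dcell E w) \ Bad E) ≠ 0 := by
    rw [measure_diff_null (volBad E)]; exact hw.ne'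
  obtain ⟨x, hx⟩ := nonempty_of_measure_ne_zero hpos
  have hxGood : x ∈ Good E := ⟨hx.1.1, hx.2⟩
  have hletters : ∀ i : Fin n, E.C x i = w i := by
    intro i
    refine Good_uniq E hxGood i (w i) ?_
    have h3 := hx.1.2
    simp only [Dcell, Set.mem_iInter] at h3
    exact h3 i
  refine ⟨⟨n, 0, x, hx.1.1, ?_⟩, List.length_ofFn (f := w)⟩
  apply List.ext_getElem
  · simp
  · intro i h1 h2
    simp only [List.getElem_ofFn, List.getElem_map, List.getElem_range]
    have h4 : i < n := by simpa using h1
    have := hletters ⟨i, h4⟩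
    simp only [zero_add]
    rw [← this]

lemma complexity_ge {r s : ℝ}
    (hirr : ∀ p q : ℤ, (p, q) ≠ (0, 0) → ∀ k : ℤ, (p : ℝ) * r + (q : ℝ) * s ≠ (k : ℝ))
    (E : PieceExchange (fun x : ℝ × ℝ => (x.1 + r, x.2 + s)) m) (n : ℕ) :
    2 * n + 1 ≤ E.complexity n := by
  classical
  have hfin : Finite {w : List (Fin m) // w ∈ E.lang ∧ w.length = n} := by
    refine Finite.of_injective
      (fun w => (fun i : Fin n => w.val.get (Fin.cast w.prop.2.symm i))) ?_
    intro w1 w2 h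
    apply Subtype.ext
    apply List.ext_get (by rw [w1.prop.2, w2.prop.2])
    intro i hi1 hi2
    have := congrFun h ⟨i, by rw [← w1.prop.2]; exact hi1⟩
    simpa [Fin.cast] using this
  have hinj : Function.Injective (fun w : {w // w ∈ Lp E n} =>
      (⟨List.ofFn w.val, word_in_lang E w.val w.prop⟩ :
        {w : List (Fin m) // w ∈ E.lang ∧ w.length = n})) := by
    intro w1 w2 h
    apply Subtype.ext
    have h2 := congrArg Subtype.val h
    simp only at h2
    exact List.ofFn_injective h2
  calc 2 * n + 1 ≤ (Lp E n).card := card_ge hirr E n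
    _ = Nat.card {w // w ∈ Lp E n} := (Nat.card_eq_finsetCard _).symm
    _ ≤ Nat.card {w : List (Fin m) // w ∈ E.lang ∧ w.length = n} :=
        Nat.card_le_card_of_injective _ hinj
    _ = E.complexity n := rfl

end St0

/-- If `r, s` are reals with `n r + m s ∉ ℤ` for every pair of integers
`(n, m) ≠ (0, 0)` (so that the translation `T (x,y) = (x+r, y+s)` induces an ergodic rotation
of the torus `ℝ²/ℤ²`), then every exchange of pieces conjugate to `T` has complexity at least
`2n + 1` for every `n ≥ 1`; in particular the complexity function associated to `T` (the
infimum over all conjugate exchanges of pieces) is at least `2n + 1` for every `n ≥ 1`. -/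
theorem complexity_lower_bound_translation (r s : ℝ)
    (hirr : ∀ p q : ℤ, (p, q) ≠ (0, 0) → ∀ k : ℤ, (p : ℝ) * r + (q : ℝ) * s ≠ (k : ℝ)) :
    (∀ (m : ℕ) (E : PieceExchange (fun x : ℝ × ℝ => (x.1 + r, x.2 + s)) m),
      E.Conjugate → ∀ n : ℕ, 1 ≤ n → 2 * n + 1 ≤ E.complexity n) ∧
    (∀ n : ℕ, 1 ≤ n →
      (2 * n + 1 : ℕ∞) ≤ complexityFn (fun x : ℝ × ℝ => (x.1 + r, x.2 + s)) n) := by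
  constructor
  · exact fun m E _ n _ => St0.complexity_ge hirr E n
  · intro n _
    rw [complexityFn]
    refine le_iInf fun m => le_iInf fun E => le_iInf fun _ => ?_
    have h := St0.complexity_ge hirr E n
    exact_mod_cast h

end
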